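/- arXiv:2512.11777 — 3 statements merged into one kernel-verified Lean document; each statement's English description precedes it below -/
import Mathlib

section
/- Let Q = Z B Zᵀ ∈ [0,1]^{N×N} with rank(B) = d ≤ K, and Q̃ = QQ. Then: (i) σ₁(Q̃) ≤ N²; (ii) σ_{d+1}(Q̃) = 0; and (iii) σ_d(Q̃) ≥ N π̃ λ_d(B̃), so in particular σ_d(Q̃) ≥ π̃ b̃ N² when λ_d(B̃) = b̃N. -/
open Matrix Finset

variable {m : ℕ}

local notation "E" m => EuclideanSpace ℝ (Fin m)

lemma inner_eq_dot (x y : EuclideanSpace ℝ (Fin m)) :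
    (inner ℝ x y : ℝ) = (WithLp.equiv 2 _ x) ⬝ᵥ (WithLp.equiv 2 _ y) := by
  simp [PiLp.inner_apply, dotProduct, WithLp.equiv_apply, RCLike.inner_apply, mul_comm]

section herm
variable {A : Matrix (Fin m) (Fin m) ℝ} (hA : A.IsHermitian)

lemma quad_expand (x : EuclideanSpace ℝ (Fin m)) :
    (inner ℝ x (Matrix.toEuclideanLin A x) : ℝ) =
      ∑ i, hA.eigenvalues i * (inner ℝ (hA.eigenvectorBasis i) x : ℝ) ^ 2 := by
  rw [← OrthonormalBasis.sum_inner_mul_inner hA.eigenvectorBasis]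
  refine Finset.sum_congr rfl fun i _ => ?_
  have hsymm : (Matrix.toEuclideanLin A).IsSymmetric :=
    Matrix.isHermitian_iff_isSymmetric.mp hA
  have h1 : (inner ℝ (hA.eigenvectorBasis i) (Matrix.toEuclideanLin A x) : ℝ)
      = hA.eigenvalues i * inner ℝ (hA.eigenvectorBasis i) x := by
    rw [← hsymm]
    have : Matrix.toEuclideanLin A (hA.eigenvectorBasis i)
        = hA.eigenvalues i • hA.eigenvectorBasis i := by
      apply (WithLp.equiv 2 _).injective
      simp [Matrix.ofLp_toEuclideanLin_apply, hA.mulVec_eigenvectorBasis]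
    rw [this, inner_smul_left]
    simp
  rw [h1, real_inner_comm x]
  ring

lemma norm_expand (x : EuclideanSpace ℝ (Fin m)) :
    (inner ℝ x x : ℝ) = ∑ i, (inner ℝ (hA.eigenvectorBasis i) x : ℝ) ^ 2 := by
  rw [← OrthonormalBasis.sum_inner_mul_inner hA.eigenvectorBasis x x]
  refine Finset.sum_congr rfl fun i _ => ?_
  rw [real_inner_comm x]
  ring

lemma coeff_eq_zero (S : Finset (Fin m)) (x : EuclideanSpace ℝ (Fin m))
    (hx : x ∈ Submodule.span ℝ (Set.range fun i : S => hA.eigenvectorBasis i)) (j : Fin m)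
    (hj : j ∉ S) : (inner ℝ (hA.eigenvectorBasis j) x : ℝ) = 0 := by
  induction hx using Submodule.span_induction with
  | mem y hy =>
    obtain ⟨i, rfl⟩ := hy
    exact hA.eigenvectorBasis.orthonormal.2 (fun h => hj (h ▸ i.2))
  | zero => simp
  | add a b _ _ ha hb => rw [inner_add_right, ha, hb, add_zero]
  | smul c a _ ha => rw [inner_smul_right, ha, mul_zero]

lemma finrank_span_sub (S : Finset (Fin m)) :
    Module.finrank ℝ (Submodule.span ℝ (Set.range fun i : S => hA.eigenvectorBasis i)) =
      S.card := by
  have : (fun i : S => hA.eigenvectorBasis i) = ⇑hA.eigenvectorBasis ∘ Subtype.val := rfl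
  rw [this, finrank_span_eq_card (hA.eigenvectorBasis.orthonormal.linearIndependent.comp
    _ Subtype.val_injective)]
  simp

lemma rayleigh_le_on_span (S : Finset (Fin m)) (c : ℝ)
    (hc : ∀ i ∈ S, hA.eigenvalues i ≤ c) (x : EuclideanSpace ℝ (Fin m))
    (hx : x ∈ Submodule.span ℝ (Set.range fun i : S => hA.eigenvectorBasis i)) :
    (inner ℝ x (Matrix.toEuclideanLin A x) : ℝ) ≤ c * inner ℝ x x := by
  rw [quad_expand hA, norm_expand hA, Finset.mul_sum]
  refine Finset.sum_le_sum fun i _ => ?_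
  by_cases hiS : i ∈ S
  · exact mul_le_mul_of_nonneg_right (hc i hiS) (sq_nonneg _)
  · rw [coeff_eq_zero hA S x hx i hiS]; simp

lemma rayleigh_ge_on_span (S : Finset (Fin m)) (c : ℝ)
    (hc : ∀ i ∈ S, c ≤ hA.eigenvalues i) (x : EuclideanSpace ℝ (Fin m))
    (hx : x ∈ Submodule.span ℝ (Set.range fun i : S => hA.eigenvectorBasis i)) :
    c * inner ℝ x x ≤ (inner ℝ x (Matrix.toEuclideanLin A x) : ℝ) := by
  rw [quad_expand hA, norm_expand hA, Finset.mul_sum]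
  refine Finset.sum_le_sum fun i _ => ?_
  by_cases hiS : i ∈ S
  · exact mul_le_mul_of_nonneg_right (hc i hiS) (sq_nonneg _)
  · rw [coeff_eq_zero hA S x hx i hiS]; simp

lemma cf_lower (j : ℕ) (hj1 : 1 ≤ j) (hjm : j ≤ m) (s : ℝ)
    (V : Submodule ℝ (EuclideanSpace ℝ (Fin m))) (hV : j ≤ Module.finrank ℝ V)
    (hs : ∀ x ∈ V, s * (inner ℝ x x : ℝ) ≤ (inner ℝ x (Matrix.toEuclideanLin A x) : ℝ)) :
    s ≤ hA.eigenvalues (Tuple.sort hA.eigenvalues ⟨m - j, by omega⟩) := by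
  set p := Tuple.sort hA.eigenvalues with hp
  set c := hA.eigenvalues (p ⟨m - j, by omega⟩) with hcdef
  set S : Finset (Fin m) := Finset.image p (Finset.Iic ⟨m - j, by omega⟩) with hS
  set W := Submodule.span ℝ (Set.range fun i : S => hA.eigenvectorBasis i) with hW
  have hcardS : S.card = m - j + 1 := by
    rw [hS, Finset.card_image_of_injective _ p.injective, Fin.card_Iic]
  have hWrank : Module.finrank ℝ W = m - j + 1 := by
    rw [hW, finrank_span_sub hA, hcardS]
  have hinf : 0 < Module.finrank ℝ ↥(W ⊓ V) := by
    have h1 := Submodule.finrank_sup_add_finrank_inf_eq W V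
    have h2 : Module.finrank ℝ ↥(W ⊔ V) ≤ m := by
      simpa using Submodule.finrank_le (W ⊔ V)
    omega
  obtain ⟨⟨x, hxWV⟩, hx0⟩ := Module.finrank_pos_iff_exists_ne_zero.mp hinf
  have hx0' : x ≠ 0 := by simpa using hx0
  have hxW : x ∈ W := hxWV.1
  have hxV : x ∈ V := hxWV.2
  have hub : (inner ℝ x (Matrix.toEuclideanLin A x) : ℝ) ≤ c * inner ℝ x x := by
    refine rayleigh_le_on_span hA S c (fun i hi => ?_) x hxW
    rw [hS, Finset.mem_image] at hi
    obtain ⟨k, hk, rfl⟩ := hi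
    exact Tuple.monotone_sort hA.eigenvalues (Finset.mem_Iic.mp hk)
  have hlb := hs x hxV
  have hpos : (0:ℝ) < inner ℝ x x := lt_of_le_of_ne real_inner_self_nonneg (fun h => hx0' (inner_self_eq_zero.mp h.symm))
  exact le_of_mul_le_mul_right (hlb.trans hub) hpos

lemma cf_exists (j : ℕ) (hj1 : 1 ≤ j) (hjm : j ≤ m) :
    ∃ V : Submodule ℝ (EuclideanSpace ℝ (Fin m)), Module.finrank ℝ V = j ∧
      ∀ x ∈ V, hA.eigenvalues (Tuple.sort hA.eigenvalues ⟨m - j, by omega⟩) * (inner ℝ x x : ℝ)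
        ≤ (inner ℝ x (Matrix.toEuclideanLin A x) : ℝ) := by
  set p := Tuple.sort hA.eigenvalues with hp
  set S : Finset (Fin m) := Finset.image p (Finset.Ici ⟨m - j, by omega⟩) with hS
  refine ⟨Submodule.span ℝ (Set.range fun i : S => hA.eigenvectorBasis i), ?_, ?_⟩
  · rw [finrank_span_sub hA, hS, Finset.card_image_of_injective _ p.injective, Fin.card_Ici]
    simp only [Fin.val_mk]
    omega
  · intro x hx
    refine rayleigh_ge_on_span hA S _ (fun i hi => ?_) x hx
    rw [hS, Finset.mem_image] at hi
    obtain ⟨k, hk, rfl⟩ := hi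
    exact Tuple.monotone_sort hA.eigenvalues (Finset.mem_Ici.mp hk)

lemma sum_eigs_eq_trace : ∑ i, hA.eigenvalues i = A.trace := by
  rw [hA.trace_eq_sum_eigenvalues]
  simp

lemma eig_le_trace (hA' : A.PosSemidef) (i : Fin m) : hA'.1.eigenvalues i ≤ A.trace := by
  rw [← sum_eigs_eq_trace hA'.1]
  exact Finset.single_le_sum (fun j _ => hA'.eigenvalues_nonneg j) (Finset.mem_univ i)

end herm

/-- `sv M j` is the `j`-th largest singular value (1-indexed) of the square real matrix `M`,
i.e. the square root of the `j`-th largest eigenvalue of `M Mᴴ`. -/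
noncomputable def sv {n : ℕ} (M : Matrix (Fin n) (Fin n) ℝ) (j : ℕ) : ℝ :=
  if h : 1 ≤ j ∧ j ≤ n then
    Real.sqrt ((Matrix.isHermitian_mul_conjTranspose_self M).eigenvalues
      (Tuple.sort (Matrix.isHermitian_mul_conjTranspose_self M).eigenvalues ⟨n - j, by omega⟩))
  else 0

lemma sv_nonneg {m : ℕ} (M : Matrix (Fin m) (Fin m) ℝ) (j : ℕ) : 0 ≤ sv M j := by
  rw [sv]; split
  · exact Real.sqrt_nonneg _
  · exact le_refl 0

lemma sv_le_sqrt_trace {m : ℕ} (M : Matrix (Fin m) (Fin m) ℝ) (j : ℕ) (hj : 1 ≤ j) (hjm : j ≤ m) :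
    sv M j ≤ Real.sqrt ((M * Mᴴ).trace) := by
  rw [sv, dif_pos ⟨hj, hjm⟩]
  exact Real.sqrt_le_sqrt (eig_le_trace (Matrix.posSemidef_self_mul_conjTranspose M) _)

lemma sqrt_le_sv {m : ℕ} (M : Matrix (Fin m) (Fin m) ℝ) (j : ℕ) (hj : 1 ≤ j) (hjm : j ≤ m)
    (s : ℝ) (V : Submodule ℝ (EuclideanSpace ℝ (Fin m))) (hV : j ≤ Module.finrank ℝ V)
    (hs : ∀ x ∈ V, s * (inner ℝ x x : ℝ) ≤ (inner ℝ x (Matrix.toEuclideanLin (M * Mᴴ) x) : ℝ)) :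
    Real.sqrt s ≤ sv M j := by
  rw [sv, dif_pos ⟨hj, hjm⟩]
  exact Real.sqrt_le_sqrt
    (cf_lower (Matrix.isHermitian_mul_conjTranspose_self M) j hj hjm s V hV hs)

lemma sv_eq_zero {m : ℕ} (M : Matrix (Fin m) (Fin m) ℝ) (j : ℕ) (hj : 1 ≤ j) (hjm : j ≤ m)
    (h : M.rank < j) : sv M j = 0 := by
  set hA := Matrix.isHermitian_mul_conjTranspose_self M
  rw [sv, dif_pos ⟨hj, hjm⟩]
  set p := Tuple.sort hA.eigenvalues with hp
  have h0 : hA.eigenvalues (p ⟨m - j, by omega⟩) = 0 := by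
    by_contra hne
    have hpos : 0 < hA.eigenvalues (p ⟨m - j, by omega⟩) :=
      lt_of_le_of_ne (Matrix.eigenvalues_self_mul_conjTranspose_nonneg M _) (Ne.symm hne)
    set S : Finset (Fin m) := Finset.image p (Finset.Ici ⟨m - j, by omega⟩) with hS
    have hcard : S.card = j := by
      rw [hS, Finset.card_image_of_injective _ p.injective, Fin.card_Ici]
      simp only [Fin.val_mk]; omega
    have hsub : S ⊆ Finset.univ.filter (fun i => hA.eigenvalues i ≠ 0) := by
      intro i hi
      rw [hS, Finset.mem_image] at hi
      obtain ⟨k, hk, rfl⟩ := hi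
      have : 0 < hA.eigenvalues (p k) :=
        lt_of_lt_of_le hpos (Tuple.monotone_sort hA.eigenvalues (Finset.mem_Ici.mp hk))
      exact Finset.mem_filter.mpr ⟨Finset.mem_univ _, this.ne'⟩
    have hrk : (M * Mᴴ).rank = Fintype.card {i // hA.eigenvalues i ≠ 0} :=
      hA.rank_eq_card_non_zero_eigs
    have h1 : j ≤ (M * Mᴴ).rank := by
      rw [hrk, Fintype.card_subtype]
      calc j = S.card := hcard.symm
        _ ≤ _ := Finset.card_le_card hsub
    have h2 : (M * Mᴴ).rank ≤ M.rank := Matrix.rank_mul_le_left M Mᴴ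
    omega
  rw [h0, Real.sqrt_zero]

lemma inner_toEuclideanLin_eq_dot {m : ℕ} (A : Matrix (Fin m) (Fin m) ℝ)
    (x : EuclideanSpace ℝ (Fin m)) :
    (inner ℝ x (Matrix.toEuclideanLin A x) : ℝ) =
      (WithLp.equiv 2 _ x) ⬝ᵥ (A *ᵥ (WithLp.equiv 2 _ x)) := by
  exact inner_eq_dot _ _

set_option maxHeartbeats 2000000

/-- For `Q = Z B Zᵀ` with `rank B = d ≤ K` and `Q̃ = QQ`:
(i) `σ₁(Q̃) ≤ N²`; (ii) `σ_{d+1}(Q̃) = 0`; (iii) `σ_d(Q̃) ≥ N π̃ λ_d(B̃)`, and in particular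
`σ_d(Q̃) ≥ π̃ b̃ N²` when `λ_d(B̃) = b̃ N`. -/
theorem stmt4 {N K d : ℕ} (hdK : d ≤ K) (hdN : d ≤ N)
    (B : Matrix (Fin K) (Fin K) ℝ) (hB : ∀ k l, B k l ∈ Set.Icc (0 : ℝ) 1)
    (hrank : B.rank = d)
    (τ : Fin N → Fin K)
    (Z : Matrix (Fin N) (Fin K) ℝ) (hZ : ∀ i k, Z i k = if τ i = k then 1 else 0)
    (Q : Matrix (Fin N) (Fin N) ℝ) (hQ : Q = Z * B * Zᵀ)
    (n : Fin K → ℕ) (hn : ∀ k, n k = (Finset.univ.filter fun i => τ i = k).card)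
    (πt : ℝ) (hπt : IsLeast (Set.range fun k => (n k : ℝ) / N) πt)
    (Bt : Matrix (Fin K) (Fin K) ℝ)
    (hBt : Bt = B * Matrix.diagonal (fun k => (n k : ℝ)) * B)
    (bt : ℝ) (hbt : 0 < bt) (hlam : sv Bt d = bt * N) :
    sv (Q * Q) 1 ≤ (N : ℝ) ^ 2 ∧
    sv (Q * Q) (d + 1) = 0 ∧
    (N : ℝ) * πt * sv Bt d ≤ sv (Q * Q) d ∧
    πt * bt * (N : ℝ) ^ 2 ≤ sv (Q * Q) d := by
  have hπt0 : 0 ≤ πt := by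
    obtain ⟨k, hk⟩ := hπt.1
    rw [← hk]; positivity
  rcases Nat.eq_zero_or_pos N with hN0 | hNpos
  · subst hN0
    have h1 : sv (Q * Q) 1 = 0 := by rw [sv, dif_neg (by omega)]
    have h2 : sv (Q * Q) (d + 1) = 0 := by rw [sv, dif_neg (by omega)]
    have h4 : sv (Q * Q) d = 0 := by rw [sv, dif_neg (by omega)]
    refine ⟨by rw [h1]; positivity, h2, ?_, ?_⟩ <;> rw [h4] <;> simp
  -- N ≥ 1
  have hd1 : 1 ≤ d := by
    by_contra hd0
    have hd0' : d = 0 := by omega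
    rw [hd0', sv, dif_neg (by omega)] at hlam
    have : (0:ℝ) < bt * N := by positivity
    linarith
  have hQentry : ∀ i j, Q i j = B (τ i) (τ j) := by
    intro i j
    rw [hQ]
    rw [Matrix.mul_apply]
    have : ∀ l, (Z * B) i l = B (τ i) l := by
      intro l
      rw [Matrix.mul_apply]
      simp [hZ, ite_mul]
    simp only [this, Matrix.transpose_apply, hZ, mul_ite, mul_one, mul_zero]
    simp
  -- Part (i)
  have part1 : sv (Q * Q) 1 ≤ (N : ℝ) ^ 2 := by
    have hQQ : ∀ i j, 0 ≤ (Q*Q) i j ∧ (Q*Q) i j ≤ N := by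
      intro i j
      rw [Matrix.mul_apply]
      constructor
      · exact Finset.sum_nonneg fun k _ => mul_nonneg
          (by rw [hQentry]; exact (hB _ _).1) (by rw [hQentry]; exact (hB _ _).1)
      · calc ∑ k, Q i k * Q k j ≤ ∑ _k : Fin N, (1:ℝ) := by
              refine Finset.sum_le_sum fun k _ => ?_
              have h1 := hB (τ i) (τ k); have h2 := hB (τ k) (τ j)
              rw [hQentry, hQentry]
              nlinarith [h1.1, h1.2, h2.1, h2.2]
          _ = N := by simp
    have htr : ((Q*Q) * (Q*Q)ᴴ).trace ≤ ((N:ℝ)^2)^2 := by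
      have heq : ((Q*Q) * (Q*Q)ᴴ).trace = ∑ i, ∑ j, ((Q*Q) i j)^2 := by
        simp only [Matrix.trace, Matrix.diag, Matrix.mul_apply, Matrix.conjTranspose_apply,
          star_trivial, sq]
      rw [heq]
      calc ∑ i, ∑ j, ((Q*Q) i j)^2 ≤ ∑ _i : Fin N, ∑ _j : Fin N, (N:ℝ)^2 := by
            refine Finset.sum_le_sum fun i _ => Finset.sum_le_sum fun j _ => ?_
            have := hQQ i j
            nlinarith [this.1, this.2]
        _ = ((N:ℝ)^2)^2 := by simp [Finset.sum_const]; ring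
    refine (sv_le_sqrt_trace (Q*Q) 1 le_rfl hNpos).trans ?_
    rw [show ((N:ℝ)^2) = Real.sqrt (((N:ℝ)^2)^2) from (Real.sqrt_sq (by positivity)).symm]
    exact Real.sqrt_le_sqrt htr
  have hrkQQ : (Q * Q).rank ≤ d := by
    calc (Q * Q).rank ≤ Q.rank := Matrix.rank_mul_le_left Q Q
      _ ≤ (Z * B).rank := by rw [hQ]; exact Matrix.rank_mul_le_left (Z * B) Zᵀ
      _ ≤ B.rank := Matrix.rank_mul_le_right Z B
      _ = d := hrank
  have part2 : sv (Q * Q) (d + 1) = 0 := by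
    rcases le_or_gt (d + 1) N with hle | hlt
    · exact sv_eq_zero (Q * Q) (d + 1) (by omega) hle (by omega)
    · rw [sv, dif_neg (by omega)]
  rcases eq_or_lt_of_le hπt0 with hπteq | hπtpos
  · refine ⟨part1, part2, ?_, ?_⟩ <;> rw [← hπteq] <;>
      simpa using sv_nonneg (Q * Q) d
  -- main case: πt > 0
  have hNR : (0:ℝ) < N := by exact_mod_cast hNpos
  have hNπ : ∀ k, (N:ℝ) * πt ≤ (n k : ℝ) := by
    intro k
    have hk := hπt.2 ⟨k, rfl⟩
    rw [le_div_iff₀ hNR] at hk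
    linarith
  have hnk0 : ∀ k, (0:ℝ) < (n k : ℝ) := fun k =>
    lt_of_lt_of_le (by positivity) (hNπ k)
  have hZtZ : Zᵀ * Z = Matrix.diagonal (fun k => (n k : ℝ)) := by
    ext k l
    rw [Matrix.mul_apply]
    simp only [Matrix.transpose_apply, hZ]
    by_cases hkl : k = l
    · subst hkl
      rw [Matrix.diagonal_apply_eq, hn]
      have hsq : ∀ i : Fin N, ((if τ i = k then (1:ℝ) else 0) * (if τ i = k then 1 else 0))
          = (if τ i = k then 1 else 0) := fun i => by split <;> simp
      simp only [hsq]
      simp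
    · rw [Matrix.diagonal_apply_ne _ hkl]
      apply Finset.sum_eq_zero
      intro i _
      by_cases h1 : τ i = k <;> by_cases h2 : τ i = l <;> simp_all
  have hQQZ : Q * Q = Z * Bt * Zᵀ := by
    rw [hQ, hBt, ← hZtZ]
    simp only [Matrix.mul_assoc]
  set hBtH := Matrix.isHermitian_mul_conjTranspose_self Bt with hBtHdef
  obtain ⟨VB, hVBrank, hVBbound⟩ := cf_exists hBtH d hd1 hdK
  set μB := hBtH.eigenvalues (Tuple.sort hBtH.eigenvalues ⟨K - d, by omega⟩) with hμBdef
  have hμB0 : 0 ≤ μB := Matrix.eigenvalues_self_mul_conjTranspose_nonneg Bt _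
  have hsveq : sv Bt d = Real.sqrt μB := by rw [sv, dif_pos ⟨hd1, hdK⟩]
  set Dinv := Matrix.diagonal (fun k => ((n k : ℝ))⁻¹) with hDinv
  set G := Z * Dinv with hG
  set L := Matrix.toEuclideanLin G with hL
  have hZtG : Zᵀ * G = 1 := by
    rw [hG, ← Matrix.mul_assoc, hZtZ, hDinv, Matrix.diagonal_mul_diagonal]
    rw [show (fun k => (n k:ℝ) * ((n k : ℝ))⁻¹) = fun _ => (1:ℝ) from
      funext fun k => mul_inv_cancel₀ (hnk0 k).ne']
    exact Matrix.diagonal_one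
  have hGinj : Function.Injective (G.mulVec) := by
    intro v w hvw
    have h2 := congrArg (fun t => Zᵀ *ᵥ t) hvw
    simpa [Matrix.mulVec_mulVec, hZtG] using h2
  have hLinj : Function.Injective L := by
    intro a b hab
    apply (WithLp.equiv 2 (Fin K → ℝ)).injective
    apply hGinj
    have := congrArg (WithLp.equiv 2 (Fin N → ℝ)) hab
    simpa only [WithLp.equiv_apply, hL, Matrix.ofLp_toEuclideanLin_apply] using this
  set V := Submodule.map (L : EuclideanSpace ℝ (Fin K) →ₗ[ℝ] EuclideanSpace ℝ (Fin N)) VB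
    with hV
  have hVrank : Module.finrank ℝ V = d := by
    rw [← hVBrank, hV]
    exact (Submodule.equivMapOfInjective L hLinj VB).finrank_eq.symm
  set a := (N:ℝ) * πt with ha
  have ha0 : 0 ≤ a := by positivity
  have key : ∀ x ∈ V, (a^2 * μB) * (inner ℝ x x : ℝ)
      ≤ (inner ℝ x (Matrix.toEuclideanLin ((Q*Q) * (Q*Q)ᴴ) x) : ℝ) := by
    rintro x hx
    obtain ⟨u, huVB, rfl⟩ := Submodule.mem_map.mp hx
    set uf := WithLp.equiv 2 (Fin K → ℝ) u with huf
    set y := Dinv *ᵥ uf with hy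
    set xf := Z *ᵥ y with hxfdef
    have hxf : WithLp.equiv 2 (Fin N → ℝ) (L u) = xf := by
      simp only [hL, hxfdef, hy, huf, hG, WithLp.equiv_apply, Matrix.ofLp_toEuclideanLin_apply,
        Matrix.mulVec_mulVec]
    have hdiagy : Matrix.diagonal (fun k => (n k : ℝ)) *ᵥ y = uf := by
      funext k
      rw [Matrix.mulVec_diagonal, hy, hDinv, Matrix.mulVec_diagonal]
      rw [← mul_assoc, mul_inv_cancel₀ (hnk0 k).ne', one_mul]
    -- transfer inner ℝ products to dot products
    rw [inner_toEuclideanLin_eq_dot, inner_eq_dot, hxf]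
    -- Bt side bound from cf_exists, in dot form
    have hBtbound : μB * (uf ⬝ᵥ uf) ≤ uf ⬝ᵥ ((Bt * Btᴴ) *ᵥ uf) := by
      have h := hVBbound u huVB
      rwa [inner_toEuclideanLin_eq_dot, inner_eq_dot] at h
    -- dot identities
    set w := Btᴴ *ᵥ uf with hw
    have hZdot : ∀ v : Fin K → ℝ, (Z *ᵥ v) ⬝ᵥ (Z *ᵥ v) = ∑ k, (n k:ℝ) * (v k)^2 := by
      intro v
      rw [Matrix.dotProduct_mulVec, ← Matrix.mulVec_transpose, Matrix.mulVec_mulVec, hZtZ]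
      simp only [dotProduct, Matrix.mulVec_diagonal]
      exact Finset.sum_congr rfl fun k _ => by ring
    have hMH : (Q*Q)ᴴ = Z * Btᴴ * Zᵀ := by
      rw [hQQZ, Matrix.conjTranspose_mul, Matrix.conjTranspose_mul,
        Matrix.conjTranspose_eq_transpose_of_trivial Zᵀ, Matrix.transpose_transpose,
        Matrix.conjTranspose_eq_transpose_of_trivial Z, ← Matrix.mul_assoc]
    have hMHx : (Q*Q)ᴴ *ᵥ xf = Z *ᵥ w := by
      rw [hMH, hxfdef, Matrix.mulVec_mulVec, Matrix.mul_assoc (Z * Btᴴ) Zᵀ Z, hZtZ,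
        ← Matrix.mulVec_mulVec, hdiagy, ← Matrix.mulVec_mulVec]
    have hquad : xf ⬝ᵥ (((Q*Q) * (Q*Q)ᴴ) *ᵥ xf) = (Z *ᵥ w) ⬝ᵥ (Z *ᵥ w) := by
      rw [← Matrix.mulVec_mulVec, Matrix.dotProduct_mulVec, ← Matrix.mulVec_transpose]
      rw [show (Q*Q)ᵀ = (Q*Q)ᴴ from (Matrix.conjTranspose_eq_transpose_of_trivial _).symm]
      rw [hMHx]
    have hwdot : uf ⬝ᵥ ((Bt * Btᴴ) *ᵥ uf) = w ⬝ᵥ w := by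
      rw [← Matrix.mulVec_mulVec, Matrix.dotProduct_mulVec, ← Matrix.mulVec_transpose]
      rw [show Btᵀ = Btᴴ from (Matrix.conjTranspose_eq_transpose_of_trivial _).symm]
    -- numeric chain
    have h1 : a * (w ⬝ᵥ w) ≤ xf ⬝ᵥ (((Q*Q) * (Q*Q)ᴴ) *ᵥ xf) := by
      rw [hquad, hZdot w]
      have : w ⬝ᵥ w = ∑ k, (w k)^2 := by
        rw [dotProduct]; exact Finset.sum_congr rfl fun k _ => (sq (w k)).symm ▸ rfl
      rw [this, Finset.mul_sum]
      exact Finset.sum_le_sum fun k _ =>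
        mul_le_mul_of_nonneg_right (hNπ k) (sq_nonneg _)
    have h2 : μB * (uf ⬝ᵥ uf) ≤ w ⬝ᵥ w := by rw [← hwdot]; exact hBtbound
    have h3 : a * (xf ⬝ᵥ xf) ≤ uf ⬝ᵥ uf := by
      rw [hxfdef, hZdot y]
      have huk : ∀ k, uf k = (n k : ℝ) * y k := by
        intro k
        have := congrFun hdiagy k
        rw [Matrix.mulVec_diagonal] at this
        exact this.symm
      have : uf ⬝ᵥ uf = ∑ k, ((n k:ℝ))^2 * (y k)^2 := by
        rw [dotProduct]
        exact Finset.sum_congr rfl fun k _ => by rw [huk k]; ring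
      rw [this, Finset.mul_sum]
      refine Finset.sum_le_sum fun k _ => ?_
      have hk := hNπ k
      calc a * ((n k:ℝ) * y k ^ 2) ≤ (n k:ℝ) * ((n k:ℝ) * y k ^ 2) :=
            mul_le_mul_of_nonneg_right hk (by positivity)
        _ = (n k:ℝ) ^ 2 * y k ^ 2 := by ring
    calc (a^2 * μB) * (xf ⬝ᵥ xf) = a * (μB * (a * (xf ⬝ᵥ xf))) := by ring
      _ ≤ a * (μB * (uf ⬝ᵥ uf)) := by
          refine mul_le_mul_of_nonneg_left (mul_le_mul_of_nonneg_left h3 hμB0) ha0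
      _ ≤ a * (w ⬝ᵥ w) := mul_le_mul_of_nonneg_left h2 ha0
      _ ≤ _ := h1
  have hfinal : a * sv Bt d ≤ sv (Q * Q) d := by
    have h := sqrt_le_sv (Q * Q) d hd1 hdN (a^2 * μB) V (le_of_eq hVrank.symm) key
    rwa [Real.sqrt_mul (sq_nonneg a), Real.sqrt_sq ha0, ← hsveq] at h
  refine ⟨part1, part2, ?_, ?_⟩
  · exact hfinal
  · calc πt * bt * (N:ℝ)^2 = a * (bt * N) := by rw [ha]; ring
      _ = a * sv Bt d := by rw [hlam]
      _ ≤ sv (Q * Q) d := hfinal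
end

section
/- Let A ∈ {0,1}^{N×N} be a random matrix whose N² entries are mutually independent Bernoulli random variables with P(A_{ij} = 1) = Q_{ij}, and let Ã = AA. Then for all u, v, w ∈ {1,…,N}, Cov(Ã_{uw}, Ã_{vw}) ≥ 0. -/
open MeasureTheory ProbabilityTheory Matrix Finset

section Aux
variable {Ω ι : Type*} [MeasurableSpace Ω] {μ : Measure Ω} [IsProbabilityMeasure μ]
  {f : ι → Ω → ℝ}

lemma stmt9_integrable_prod (hm : ∀ i, Measurable (f i))
    (h0 : ∀ i ω, 0 ≤ f i ω) (h1 : ∀ i ω, f i ω ≤ 1) (S : Finset ι) :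
    Integrable (fun ω => ∏ p ∈ S, f p ω) μ := by
  refine (integrable_const (1 : ℝ)).mono'
    ((S.measurable_prod fun i _ => hm i).aestronglyMeasurable) (ae_of_all _ fun ω => ?_)
  rw [Real.norm_eq_abs, abs_of_nonneg (Finset.prod_nonneg fun i _ => h0 i ω)]
  exact Finset.prod_le_one (fun i _ => h0 i ω) (fun i _ => h1 i ω)

lemma stmt9_integral_prod (hm : ∀ i, Measurable (f i))
    (hindep : iIndepFun f μ)
    (S : Finset ι) :
    ∫ ω, ∏ p ∈ S, f p ω ∂μ = ∏ p ∈ S, ∫ ω, f p ω ∂μ := by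
  classical
  induction S using Finset.cons_induction_on with
  | empty => simp
  | cons _ _ hi ih =>
    rename_i i S
    have hIndep : IndepFun (f i) (∏ j ∈ S, f j) μ :=
      (hindep.indepFun_finsetProd_of_notMem hm hi).symm
    have h3 : (∏ j ∈ S, f j) = fun ω => ∏ p ∈ S, f p ω := by
      funext ω; simp [Finset.prod_apply]
    rw [h3] at hIndep
    have h := hIndep.integral_mul_eq_mul_integral (hm i).aestronglyMeasurable
      ((S.measurable_prod fun j _ => hm j).aestronglyMeasurable)
    simp only [Finset.prod_cons]
    have h2 : (f i * fun ω => ∏ p ∈ S, f p ω) = fun ω => f i ω * ∏ p ∈ S, f p ω := rfl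
    rw [h2] at h
    rw [h, ih]

end Aux

/-- For a random 0/1 matrix `A` with mutually independent Bernoulli entries and
`Ã = A*A`, the covariance `Cov(Ã_{uw}, Ã_{vw}) = E(Ã_{uw} Ã_{vw}) − E(Ã_{uw}) E(Ã_{vw})` is
nonnegative for all `u, v, w`. -/
theorem stmt9 {N : ℕ}
    {Ω : Type*} [MeasurableSpace Ω] (μ : Measure Ω) [IsProbabilityMeasure μ]
    (Q : Matrix (Fin N) (Fin N) ℝ) (hQrange : ∀ i j, Q i j ∈ Set.Icc (0 : ℝ) 1)
    (A : Ω → Matrix (Fin N) (Fin N) ℝ)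
    (h01 : ∀ ω i j, A ω i j = 0 ∨ A ω i j = 1)
    (hmeas : ∀ i j, Measurable fun ω => A ω i j)
    (hindep : iIndepFun
      (fun (p : Fin N × Fin N) ω => A ω p.1 p.2) μ)
    (hBer : ∀ i j, μ {ω | A ω i j = 1} = ENNReal.ofReal (Q i j))
    (u v w : Fin N) :
    0 ≤ (∫ ω, (A ω * A ω) u w * (A ω * A ω) v w ∂μ) -
        (∫ ω, (A ω * A ω) u w ∂μ) * (∫ ω, (A ω * A ω) v w ∂μ) := by
  classical
  set f : Fin N × Fin N → Ω → ℝ := fun p ω => A ω p.1 p.2 with hf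
  have hm : ∀ p, Measurable (f p) := fun p => hmeas p.1 p.2
  have h0 : ∀ p ω, 0 ≤ f p ω := by
    intro p ω; rcases h01 ω p.1 p.2 with h | h <;> simp [hf, h]
  have h1 : ∀ p ω, f p ω ≤ 1 := by
    intro p ω; rcases h01 ω p.1 p.2 with h | h <;> simp [hf, h]
  have hsq : ∀ p ω, f p ω * f p ω = f p ω := by
    intro p ω; rcases h01 ω p.1 p.2 with h | h <;> simp [hf, h]
  set q : Fin N × Fin N → ℝ := fun p => ∫ ω, f p ω ∂μ with hq
  have hq0 : ∀ p, 0 ≤ q p := fun p => integral_nonneg (h0 p)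
  have hq1 : ∀ p, q p ≤ 1 := by
    intro p
    have hint : Integrable (f p) μ := (integrable_const 1).mono'
      (hm p).aestronglyMeasurable (ae_of_all _ fun ω => by
        rw [Real.norm_eq_abs, abs_of_nonneg (h0 p ω)]; exact h1 p ω)
    calc q p ≤ ∫ _, (1 : ℝ) ∂μ := integral_mono hint (integrable_const 1) (h1 p)
      _ = 1 := by simp
  have habs : ∀ (S T : Finset (Fin N × Fin N)) ω, T ⊆ S →
      (∏ p ∈ S, f p ω) * ∏ p ∈ T, f p ω = ∏ p ∈ S, f p ω := by
    intro S T ω hTS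
    have hTT : (∏ p ∈ T, f p ω) * ∏ p ∈ T, f p ω = ∏ p ∈ T, f p ω := by
      rw [← Finset.prod_mul_distrib]; exact Finset.prod_congr rfl fun p _ => hsq p ω
    rw [← Finset.prod_sdiff hTS, mul_assoc, hTT]
  have hunion : ∀ (S T : Finset (Fin N × Fin N)) ω,
      (∏ p ∈ S, f p ω) * ∏ p ∈ T, f p ω = ∏ p ∈ S ∪ T, f p ω := by
    intro S T ω
    rw [← Finset.prod_union_inter]
    exact habs _ _ ω (Finset.inter_subset_union)
  have hentry : ∀ (a b k : Fin N) ω, A ω a k * A ω k b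
      = ∏ p ∈ ({(a, k), (k, b)} : Finset (Fin N × Fin N)), f p ω := by
    intro a b k ω
    by_cases h : ((a, k) : Fin N × Fin N) = (k, b)
    · rw [Prod.mk.injEq] at h
      obtain ⟨ha, hb⟩ := h
      subst ha; subst hb
      simp [hsq (a, a) ω, hf]
      exact hsq (a, a) ω
    · rw [Finset.prod_pair h]
  set Sf : Fin N → Fin N → Finset (Fin N × Fin N) := fun a k => {(a, k), (k, w)} with hSf
  have hXuw : ∀ ω a, (A ω * A ω) a w = ∑ k, ∏ p ∈ Sf a k, f p ω := by
    intro ω a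
    rw [Matrix.mul_apply]
    exact Finset.sum_congr rfl fun k _ => hentry a w k ω
  have hIone : ∀ a, (∫ ω, (A ω * A ω) a w ∂μ) = ∑ k, ∏ p ∈ Sf a k, q p := by
    intro a
    rw [integral_congr_ae (ae_of_all _ fun ω => hXuw ω a),
      integral_finset_sum _ fun k _ => stmt9_integrable_prod hm h0 h1 _]
    exact Finset.sum_congr rfl fun k _ => stmt9_integral_prod hm hindep _
  have hprodpt : ∀ ω, (A ω * A ω) u w * (A ω * A ω) v w
      = ∑ k, ∑ l, ∏ p ∈ Sf u k ∪ Sf v l, f p ω := by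
    intro ω
    rw [hXuw ω u, hXuw ω v, Finset.sum_mul_sum]
    exact Finset.sum_congr rfl fun k _ => Finset.sum_congr rfl fun l _ => hunion _ _ ω
  have hItwo : (∫ ω, (A ω * A ω) u w * (A ω * A ω) v w ∂μ)
      = ∑ k, ∑ l, ∏ p ∈ Sf u k ∪ Sf v l, q p := by
    rw [integral_congr_ae (ae_of_all _ hprodpt),
      integral_finset_sum _ fun k _ =>
        integrable_finset_sum _ fun l _ => stmt9_integrable_prod hm h0 h1 _]
    refine Finset.sum_congr rfl fun k _ => ?_
    rw [integral_finset_sum _ fun l _ => stmt9_integrable_prod hm h0 h1 _]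
    exact Finset.sum_congr rfl fun l _ => stmt9_integral_prod hm hindep _
  rw [hItwo, hIone u, hIone v, Finset.sum_mul_sum, ← Finset.sum_sub_distrib]
  refine Finset.sum_nonneg fun k _ => ?_
  rw [← Finset.sum_sub_distrib]
  refine Finset.sum_nonneg fun l _ => ?_
  rw [← Finset.prod_union_inter (s₁ := Sf u k) (s₂ := Sf v l) (f := q)]
  have hU : 0 ≤ ∏ p ∈ Sf u k ∪ Sf v l, q p := Finset.prod_nonneg fun p _ => hq0 p
  have hI : ∏ p ∈ Sf u k ∩ Sf v l, q p ≤ 1 :=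
    Finset.prod_le_one (fun p _ => hq0 p) (fun p _ => hq1 p)
  nlinarith
end

section
/- Let A ∈ {0,1}^{N×N} be a directed core-periphery stochastic block model adjacency matrix with blocks G₁, G₂ of sizes n₁, n₂ and probabilities 0 ≤ s < r, q < p ≤ 1, Q the block-constant mean matrix. Define T₁ = Σ_{w∈G₁}(1 − r²) + Σ_{w∈G₂}(1 − s²) and T₂ = Σ_{w∈G₁}(1 − q²) + Σ_{w∈G₂}(1 − s²). Then with probability at least 1 − 2N^{2 − (4/N²)T₁²}, ‖AAᵀ − QQᵀ‖_F ≤ √3 · T₁ · √(N log N); and with probability at least 1 − 2N^{2 − (4/N²)T₂²}, ‖AᵀA − QᵀQ‖_F ≤ √3 · T₂ · √(N log N). -/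
open MeasureTheory ProbabilityTheory Matrix Finset

/-- Frobenius norm of a real matrix. -/
noncomputable def frobNorm {m n : Type*} [Fintype m] [Fintype n] (M : Matrix m n ℝ) : ℝ :=
  Real.sqrt (∑ i, ∑ j, (M i j) ^ 2)

set_option maxHeartbeats 1000000

open MeasureTheory ProbabilityTheory Matrix Finset
open scoped ENNReal NNReal

section Aux



/-- Hoeffding's lemma for a Bernoulli(pb) random variable. -/
lemma hoeff_scalar (pb t : ℝ) (h0 : 0 ≤ pb) (h1 : pb ≤ 1) :
    Real.exp (-(t * pb)) * (1 - pb + pb * Real.exp t) ≤ Real.exp (t ^ 2 / 8) := by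
  set g : ℝ → ℝ := fun x => 1 - pb + pb * Real.exp x with hg
  have hg_pos : ∀ x, 0 < g x := by
    intro x
    have hx := Real.exp_pos x
    simp only [hg]
    rcases le_or_gt (Real.exp x) 1 with h | h <;> nlinarith
  have hg_deriv : ∀ x, HasDerivAt g (pb * Real.exp x) x := by
    intro x
    simpa [hg] using ((Real.hasDerivAt_exp x).const_mul pb).const_add (1 - pb)
  set d : ℝ → ℝ := fun x => pb * Real.exp x / g x with hd
  have hd_deriv : ∀ x, HasDerivAt d (d x * (1 - d x)) x := by
    intro x
    have h1' : HasDerivAt (fun x => pb * Real.exp x) (pb * Real.exp x) x :=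
      (Real.hasDerivAt_exp x).const_mul pb
    have h2' := (h1'.div (hg_deriv x) (hg_pos x).ne')
    have hgx := (hg_pos x).ne'
    refine h2'.congr_deriv ?_
    show _ = pb * Real.exp x / g x * (1 - pb * Real.exp x / g x)
    field_simp
  have hd0 : ∀ x, 0 ≤ d x := fun x =>
    div_nonneg (mul_nonneg h0 (Real.exp_pos x).le) (hg_pos x).le
  have hd1 : ∀ x, d x ≤ 1 := by
    intro x
    rw [hd]
    rw [div_le_one (hg_pos x)]
    simp only [hg]
    nlinarith [Real.exp_pos x]
  have hlip : LipschitzWith (1/4 : NNReal) d := by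
    apply lipschitzWith_of_nnnorm_deriv_le (fun x => (hd_deriv x).differentiableAt)
    intro x
    rw [(hd_deriv x).deriv, ← NNReal.coe_le_coe, coe_nnnorm, Real.norm_eq_abs]
    have h0x := hd0 x
    have h1x := hd1 x
    have hc : ((1/4 : NNReal) : ℝ) = 1/4 := by norm_num
    rw [hc, abs_le]
    constructor
    · nlinarith [mul_nonneg h0x (by linarith : (0:ℝ) ≤ 1 - d x)]
    · nlinarith [sq_nonneg (d x - 1/2)]
  have hd_zero : d 0 = pb := by
    simp [hd, hg]
  have hlip' : ∀ x, |d x - pb| ≤ |x| / 4 := by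
    intro x
    have := hlip.dist_le_mul x 0
    rw [Real.dist_eq, Real.dist_eq, hd_zero, sub_zero] at this
    have hc : ((1/4 : NNReal) : ℝ) = 1/4 := by norm_num
    rw [hc] at this
    linarith
  set φ : ℝ → ℝ := fun x => x * pb + x ^ 2 / 8 - Real.log (g x) with hφ
  have hφ_deriv : ∀ x, HasDerivAt φ (pb + x / 4 - d x) x := by
    intro x
    have hl : HasDerivAt (fun x => Real.log (g x)) (pb * Real.exp x / g x) x :=
      (hg_deriv x).log (hg_pos x).ne'
    have hm : HasDerivAt (fun x : ℝ => x * pb + x ^ 2 / 8) (pb + x / 4) x := by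
      have h1' : HasDerivAt (fun x : ℝ => x * pb) pb x := by
        simpa using (hasDerivAt_id x).mul_const pb
      have h2' : HasDerivAt (fun x : ℝ => x ^ 2 / 8) (x / 4) x := by
        have := (hasDerivAt_pow 2 x).div_const 8
        refine this.congr_deriv ?_
        norm_num
        ring
      exact h1'.add h2'
    exact hm.sub hl
  have hφ0 : φ 0 = 0 := by
    simp [hφ, hg]
  have key : ∀ x, 0 ≤ φ x := by
    intro x
    rcases le_or_gt 0 x with hx | hx
    · have hmono : MonotoneOn φ (Set.Ici (0:ℝ)) := by
        apply monotoneOn_of_deriv_nonneg (convex_Ici 0)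
        · exact fun y _ => ((hφ_deriv y).differentiableAt).continuousAt.continuousWithinAt
        · exact fun y _ => ((hφ_deriv y).differentiableAt).differentiableWithinAt
        · intro y hy
          rw [interior_Ici] at hy
          rw [(hφ_deriv y).deriv]
          have := hlip' y
          rw [abs_of_pos (Set.mem_Ioi.mp hy)] at this
          rw [abs_le] at this
          linarith [this.2]
      have := hmono (Set.self_mem_Ici) hx hx
      rwa [hφ0] at this
    · have hanti : AntitoneOn φ (Set.Iic (0:ℝ)) := by
        apply antitoneOn_of_deriv_nonpos (convex_Iic 0)
        · exact fun y _ => ((hφ_deriv y).differentiableAt).continuousAt.continuousWithinAt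
        · exact fun y _ => ((hφ_deriv y).differentiableAt).differentiableWithinAt
        · intro y hy
          rw [interior_Iic] at hy
          rw [(hφ_deriv y).deriv]
          have := hlip' y
          rw [abs_of_neg (Set.mem_Iio.mp hy)] at this
          rw [abs_le] at this
          linarith [this.1]
      have := hanti hx.le (Set.self_mem_Iic) hx.le
      rwa [hφ0] at this
  have hkey := key t
  have hgt := hg_pos t
  have : Real.exp (-(t*pb)) * (g t) = Real.exp (-(t*pb) + Real.log (g t)) := by
    rw [Real.exp_add, Real.exp_log hgt]
  rw [show (1 - pb + pb * Real.exp t) = g t from rfl, this]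
  apply Real.exp_le_exp.mpr
  simp only [hφ] at hkey
  linarith



lemma numeric_key {n T : ℝ} (hn : 2 ≤ n) (hT : 0 ≤ T)
    (hT2 : n ^ 2 * (2 * Real.log n + Real.log 2) / (4 * Real.log n) < T ^ 2) :
    T * Real.sqrt (2 * Real.log n / n) + n / 4 ≤ T * Real.sqrt ((n + 2) * Real.log n / n) := by
  have hnpos : (0:ℝ) < n := by linarith
  have hlnpos : 0 < Real.log n := Real.log_pos (by linarith)
  set ln := Real.log n with hlndef
  set L := 2 * ln + Real.log 2 with hLdef
  have hlog2 : (0.6931471803 : ℝ) < Real.log 2 := Real.log_two_gt_d9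
  have hln2 : Real.log 2 ≤ ln := by
    rw [hlndef]
    exact Real.log_le_log (by norm_num) hn
  have hL2 : (2:ℝ) ≤ L := by rw [hLdef]; linarith
  -- T lower bound
  have hLln : (0:ℝ) ≤ L / ln := by positivity
  have hsq : (n / 2 * Real.sqrt (L / ln)) ^ 2 = n ^ 2 * L / (4 * ln) := by
    have haux : (n / 2) ^ 2 * (L / ln) = n ^ 2 * L / (4 * ln) := by
      rw [div_pow, div_mul_div_comm]
      norm_num
    rw [mul_pow, Real.sq_sqrt hLln, haux]
  have hTlb : n / 2 * Real.sqrt (L / ln) ≤ T := by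
    have h2 : (n / 2 * Real.sqrt (L / ln)) ^ 2 ≤ T ^ 2 := by rw [hsq]; exact hT2.le
    have := Real.sqrt_le_sqrt h2
    rwa [Real.sqrt_sq (by positivity), Real.sqrt_sq hT] at this
  -- sqrt facts
  have hsn : Real.sqrt n ^ 2 = n := Real.sq_sqrt hnpos.le
  have hs2 : Real.sqrt 2 ^ 2 = 2 := Real.sq_sqrt (by norm_num)
  have hs2pos : (0:ℝ) < Real.sqrt 2 := Real.sqrt_pos.mpr (by norm_num)
  have hsnn : (0:ℝ) ≤ Real.sqrt n := Real.sqrt_nonneg n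
  have hsn87 : (8:ℝ)/7 ≤ Real.sqrt n := by nlinarith
  have hkey : Real.sqrt n / (2 * Real.sqrt 2) ≤ Real.sqrt (n + 2) - Real.sqrt 2 := by
    have hsn2 : Real.sqrt (n + 2) ^ 2 = n + 2 := Real.sq_sqrt (by linarith)
    have hsn2n : (0:ℝ) ≤ Real.sqrt (n + 2) := Real.sqrt_nonneg _
    have hl : (Real.sqrt n + 4) ^ 2 ≤ (2 * Real.sqrt 2 * Real.sqrt (n + 2)) ^ 2 := by
      nlinarith
    have h4 : Real.sqrt n + 4 ≤ 2 * Real.sqrt 2 * Real.sqrt (n + 2) := by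
      have := Real.sqrt_le_sqrt hl
      rwa [Real.sqrt_sq (by positivity), Real.sqrt_sq (by positivity)] at this
    rw [div_le_iff₀ (by positivity), sub_mul]
    nlinarith
  -- sqrt products
  have hprod : Real.sqrt (L / ln) * Real.sqrt (ln / n) * Real.sqrt n = Real.sqrt L := by
    rw [← Real.sqrt_mul (by positivity), ← Real.sqrt_mul (by positivity)]
    congr 1
    field_simp
  have hsL : Real.sqrt 2 ≤ Real.sqrt L := Real.sqrt_le_sqrt (by nlinarith)
  -- main chain
  have e1 : Real.sqrt ((n + 2) * ln / n) = Real.sqrt (n + 2) * Real.sqrt (ln / n) := by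
    rw [mul_div_assoc, Real.sqrt_mul (by linarith)]
  have e2 : Real.sqrt (2 * ln / n) = Real.sqrt 2 * Real.sqrt (ln / n) := by
    rw [mul_div_assoc, Real.sqrt_mul (by norm_num)]
  have hfn : (0:ℝ) ≤ Real.sqrt (ln / n) := Real.sqrt_nonneg _
  suffices h : n / 4 ≤ T * (Real.sqrt (n + 2) - Real.sqrt 2) * Real.sqrt (ln / n) by
    rw [e1, e2]
    have hexp : T * (Real.sqrt (n + 2) * Real.sqrt (ln / n))
        - T * (Real.sqrt 2 * Real.sqrt (ln / n))
        = T * (Real.sqrt (n + 2) - Real.sqrt 2) * Real.sqrt (ln / n) := by ring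
    linarith
  have t1 : (n / 2 * Real.sqrt (L / ln)) * (Real.sqrt n / (2 * Real.sqrt 2)) * Real.sqrt (ln / n)
      ≤ T * (Real.sqrt (n + 2) - Real.sqrt 2) * Real.sqrt (ln / n) := by
    apply mul_le_mul_of_nonneg_right _ hfn
    exact mul_le_mul hTlb hkey (by positivity) hT
  have t2 : (n / 2 * Real.sqrt (L / ln)) * (Real.sqrt n / (2 * Real.sqrt 2)) * Real.sqrt (ln / n)
      = n * Real.sqrt L / (4 * Real.sqrt 2) := by
    calc (n / 2 * Real.sqrt (L / ln)) * (Real.sqrt n / (2 * Real.sqrt 2)) * Real.sqrt (ln / n)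
        = (Real.sqrt (L / ln) * Real.sqrt (ln / n) * Real.sqrt n) * (n / (4 * Real.sqrt 2)) := by
          ring
      _ = Real.sqrt L * (n / (4 * Real.sqrt 2)) := by rw [hprod]
      _ = n * Real.sqrt L / (4 * Real.sqrt 2) := by ring
  have t3 : n / 4 ≤ n * Real.sqrt L / (4 * Real.sqrt 2) := by
    rw [le_div_iff₀ (by positivity)]
    have h5 : n * Real.sqrt 2 ≤ n * Real.sqrt L := mul_le_mul_of_nonneg_left hsL hnpos.le
    have h6 : n / 4 * (4 * Real.sqrt 2) = n * Real.sqrt 2 := by ring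
    linarith
  rw [t2] at t1
  linarith


variable {Ω : Type*} [MeasurableSpace Ω] {μ : Measure Ω} [IsProbabilityMeasure μ]



variable {Ω : Type*} [MeasurableSpace Ω] {μ : Measure Ω} [IsProbabilityMeasure μ]

lemma integral_01 (Y : Ω → ℝ) (h01 : ∀ ω, Y ω = 0 ∨ Y ω = 1) (hm : Measurable Y) :
    ∫ ω, Y ω ∂μ = (μ {ω | Y ω = 1}).toReal := by
  have hset : MeasurableSet {ω | Y ω = 1} := hm (measurableSet_singleton 1)
  have hY : Y = Set.indicator {ω | Y ω = 1} (fun _ => (1:ℝ)) := by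
    funext ω
    rcases h01 ω with h | h <;> simp [Set.indicator_apply, Set.mem_setOf_eq, h]
  rw [hY, integral_indicator_const _ hset]
  simp
  rfl

lemma integral_01_mem (Y : Ω → ℝ) (h01 : ∀ ω, Y ω = 0 ∨ Y ω = 1) (hm : Measurable Y) :
    0 ≤ ∫ ω, Y ω ∂μ ∧ ∫ ω, Y ω ∂μ ≤ 1 := by
  rw [integral_01 Y h01 hm]
  constructor
  · exact ENNReal.toReal_nonneg
  · have := prob_le_one (μ := μ) (s := {ω | Y ω = 1})
    simpa using ENNReal.toReal_mono ENNReal.one_ne_top this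

lemma integrable_01 (Y : Ω → ℝ) (h01 : ∀ ω, Y ω = 0 ∨ Y ω = 1) (hm : Measurable Y) :
    Integrable Y μ := by
  refine (integrable_const (1:ℝ)).mono' hm.aestronglyMeasurable (ae_of_all _ fun ω => ?_)
  rcases h01 ω with h | h <;> simp [h]

lemma mgf_center_le (Y : Ω → ℝ) (h01 : ∀ ω, Y ω = 0 ∨ Y ω = 1) (hm : Measurable Y) (t : ℝ) :
    mgf (fun ω => Y ω - ∫ ω', Y ω' ∂μ) μ t ≤ Real.exp (t ^ 2 / 8) := by
  set pb := ∫ ω', Y ω' ∂μ with hpb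
  obtain ⟨hpb0, hpb1⟩ := integral_01_mem (μ := μ) Y h01 hm
  have hpoint : ∀ ω, Real.exp (t * (Y ω - pb)) =
      Real.exp (-(t * pb)) * (1 + (Real.exp t - 1) * Y ω) := by
    intro ω
    rcases h01 ω with h | h
    · rw [h, show (1 + (Real.exp t - 1) * 0) = 1 by ring, mul_one]
      congr 1
      ring
    · rw [h, show (1 + (Real.exp t - 1) * 1) = Real.exp t by ring, ← Real.exp_add]
      congr 1
      ring
  have hint : Integrable (fun ω => 1 + (Real.exp t - 1) * Y ω) μ :=
    (integrable_const (1:ℝ)).add ((integrable_01 Y h01 hm).const_mul _)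
  have : mgf (fun ω => Y ω - pb) μ t
      = Real.exp (-(t * pb)) * (1 + (Real.exp t - 1) * pb) := by
    rw [mgf]
    simp_rw [hpoint]
    rw [integral_const_mul, integral_add (integrable_const _) ((integrable_01 Y h01 hm).const_mul _),
      integral_const_mul, integral_const]
    simp [hpb]
  rw [this]
  have := hoeff_scalar pb t hpb0 hpb1
  calc Real.exp (-(t * pb)) * (1 + (Real.exp t - 1) * pb)
      = Real.exp (-(t * pb)) * (1 - pb + pb * Real.exp t) := by ring_nf
    _ ≤ Real.exp (t ^ 2 / 8) := this

lemma mgf_sum_le {ι : Type*} (Y : ι → Ω → ℝ) (h01 : ∀ j ω, Y j ω = 0 ∨ Y j ω = 1)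
    (hm : ∀ j, Measurable (Y j))
    (hstep : ∀ (j : ι) (s : Finset ι), j ∉ s → IndepFun (Y j) (fun ω => ∑ k ∈ s, Y k ω) μ)
    (t : ℝ) (s : Finset ι) :
    mgf (fun ω => ∑ j ∈ s, (Y j ω - ∫ ω', Y j ω' ∂μ)) μ t
      ≤ Real.exp (s.card * (t ^ 2 / 8)) := by
  classical
  induction s using Finset.cons_induction with
  | empty =>
      simp [mgf]
  | cons i s his ih =>
      have hii : IndepFun (Y i) (fun ω => ∑ k ∈ s, Y k ω) μ := hstep i s his
      have hZ : IndepFun (fun ω => Y i ω - ∫ ω', Y i ω' ∂μ)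
          (fun ω => ∑ k ∈ s, (Y k ω - ∫ ω', Y k ω' ∂μ)) μ := by
        have h1 : (fun ω => Y i ω - ∫ ω', Y i ω' ∂μ)
            = (fun x => x - ∫ ω', Y i ω' ∂μ) ∘ (Y i) := rfl
        have h2 : (fun ω => ∑ k ∈ s, (Y k ω - ∫ ω', Y k ω' ∂μ))
            = (fun x => x - ∑ k ∈ s, ∫ ω', Y k ω' ∂μ) ∘ (fun ω => ∑ k ∈ s, Y k ω) := by
          funext ω
          simp [Finset.sum_sub_distrib]
        rw [h1, h2]
        exact hii.comp (measurable_id.sub_const _) (measurable_id.sub_const _)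
      have hsplit : (fun ω => ∑ j ∈ Finset.cons i s his, (Y j ω - ∫ ω', Y j ω' ∂μ))
          = (fun ω => Y i ω - ∫ ω', Y i ω' ∂μ)
            + (fun ω => ∑ j ∈ s, (Y j ω - ∫ ω', Y j ω' ∂μ)) := by
        funext ω
        rw [Finset.sum_cons, Pi.add_apply]
      rw [hsplit, hZ.mgf_add' ((hm i).sub_const _).aestronglyMeasurable
        (Finset.measurable_sum s fun k _ => (hm k).sub_const _).aestronglyMeasurable]
      have h1 := mgf_center_le (μ := μ) (Y i) (h01 i) (hm i) t
      calc mgf (fun ω => Y i ω - ∫ ω', Y i ω' ∂μ) μ t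
            * mgf (fun ω => ∑ j ∈ s, (Y j ω - ∫ ω', Y j ω' ∂μ)) μ t
          ≤ Real.exp (t ^ 2 / 8) * Real.exp (s.card * (t ^ 2 / 8)) :=
            mul_le_mul h1 ih mgf_nonneg (Real.exp_pos _).le
        _ = Real.exp ((Finset.cons i s his).card * (t ^ 2 / 8)) := by
            rw [← Real.exp_add, Finset.card_cons]
            push_cast
            ring_nf

lemma chernoff_upper {N : ℕ} (hN : 0 < N) (Y : Fin N → Ω → ℝ)
    (h01 : ∀ j ω, Y j ω = 0 ∨ Y j ω = 1) (hm : ∀ j, Measurable (Y j))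
    (hstep : ∀ (j : Fin N) (s : Finset (Fin N)), j ∉ s →
      IndepFun (Y j) (fun ω => ∑ k ∈ s, Y k ω) μ)
    (c : ℝ) (hc : 0 < c) :
    μ {ω | c ≤ ∑ j, (Y j ω - ∫ ω', Y j ω' ∂μ)} ≤
      ENNReal.ofReal (Real.exp (-(2 * c ^ 2 / N))) := by
  have hNpos : (0:ℝ) < N := by exact_mod_cast hN
  set t : ℝ := 4 * c / N with htdef
  have ht : 0 ≤ t := by positivity
  set X : Ω → ℝ := fun ω => ∑ j, (Y j ω - ∫ ω', Y j ω' ∂μ) with hX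
  have hXmeas : Measurable X :=
    Finset.measurable_sum _ fun k _ => (hm k).sub_const _
  have hXbound : ∀ ω, X ω ≤ N := by
    intro ω
    calc X ω ≤ ∑ j : Fin N, (1:ℝ) := by
          apply Finset.sum_le_sum
          intro j _
          have := (integral_01_mem (μ := μ) (Y j) (h01 j) (hm j)).1
          rcases h01 j ω with h | h <;> rw [h] <;> linarith
      _ = N := by simp
  have h_int : Integrable (fun ω => Real.exp (t * X ω)) μ := by
    refine (integrable_const (Real.exp (t * N))).mono'
      ((hXmeas.const_mul t).exp).aestronglyMeasurable (ae_of_all _ fun ω => ?_)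
    rw [Real.norm_eq_abs, abs_of_pos (Real.exp_pos _)]
    exact Real.exp_le_exp.mpr (mul_le_mul_of_nonneg_left (hXbound ω) ht)
  have hch := measure_ge_le_exp_mul_mgf (μ := μ) (X := X) c ht h_int
  have hmgf := mgf_sum_le (μ := μ) Y h01 hm hstep t Finset.univ
  rw [Finset.card_univ, Fintype.card_fin] at hmgf
  have hbound : Real.exp (-t * c) * mgf X μ t ≤ Real.exp (-(2 * c ^ 2 / N)) := by
    calc Real.exp (-t * c) * mgf X μ t
        ≤ Real.exp (-t * c) * Real.exp (N * (t ^ 2 / 8)) := by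
          exact mul_le_mul_of_nonneg_left hmgf (Real.exp_pos _).le
      _ = Real.exp (-t * c + N * (t ^ 2 / 8)) := (Real.exp_add _ _).symm
      _ = Real.exp (-(2 * c ^ 2 / N)) := by
          congr 1
          rw [htdef]
          field_simp
          ring
  rw [← ENNReal.ofReal_toReal (measure_ne_top μ {ω | c ≤ X ω})]
  exact ENNReal.ofReal_le_ofReal (hch.trans hbound)

lemma chernoff_abs {N : ℕ} (hN : 0 < N) (Y : Fin N → Ω → ℝ)
    (h01 : ∀ j ω, Y j ω = 0 ∨ Y j ω = 1) (hm : ∀ j, Measurable (Y j))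
    (hstep : ∀ (j : Fin N) (s : Finset (Fin N)), j ∉ s →
      IndepFun (Y j) (fun ω => ∑ k ∈ s, Y k ω) μ)
    (c : ℝ) (hc : 0 < c) :
    μ {ω | c ≤ |∑ j, (Y j ω - ∫ ω', Y j ω' ∂μ)|} ≤
      ENNReal.ofReal (2 * Real.exp (-(2 * c ^ 2 / N))) := by
  set Y' : Fin N → Ω → ℝ := fun j ω => 1 - Y j ω with hY'
  have h01' : ∀ j ω, Y' j ω = 0 ∨ Y' j ω = 1 := by
    intro j ω
    rcases h01 j ω with h | h <;> simp [hY', h]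
  have hm' : ∀ j, Measurable (Y' j) := fun j => (measurable_const.sub (hm j))
  have hstep' : ∀ (j : Fin N) (s : Finset (Fin N)), j ∉ s →
      IndepFun (Y' j) (fun ω => ∑ k ∈ s, Y' k ω) μ := by
    intro j s hjs
    have h1 : Y' j = (fun x => 1 - x) ∘ (Y j) := rfl
    have h2 : (fun ω => ∑ k ∈ s, Y' k ω)
        = (fun x => (s.card : ℝ) - x) ∘ (fun ω => ∑ k ∈ s, Y k ω) := by
      funext ω
      simp [hY', Finset.sum_sub_distrib]
    rw [h1, h2]
    exact (hstep j s hjs).comp (measurable_const.sub measurable_id)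
      (measurable_const.sub measurable_id)
  have hflip : ∀ ω, ∑ j, (Y' j ω - ∫ ω', Y' j ω' ∂μ)
      = -∑ j, (Y j ω - ∫ ω', Y j ω' ∂μ) := by
    intro ω
    rw [← Finset.sum_neg_distrib]
    apply Finset.sum_congr rfl
    intro j _
    have hint : ∫ ω', Y' j ω' ∂μ = 1 - ∫ ω', Y j ω' ∂μ := by
      rw [hY']
      simp only
      rw [integral_sub (integrable_const _) (integrable_01 (Y j) (h01 j) (hm j))]
      simp
    rw [hint]
    simp only [hY']
    ring
  have hsub : {ω | c ≤ |∑ j, (Y j ω - ∫ ω', Y j ω' ∂μ)|}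
      ⊆ {ω | c ≤ ∑ j, (Y j ω - ∫ ω', Y j ω' ∂μ)}
        ∪ {ω | c ≤ ∑ j, (Y' j ω - ∫ ω', Y' j ω' ∂μ)} := by
    intro ω hω
    simp only [Set.mem_setOf_eq] at hω
    rcases abs_cases (∑ j, (Y j ω - ∫ ω', Y j ω' ∂μ)) with ⟨h, _⟩ | ⟨h, _⟩
    · left
      simp only [Set.mem_setOf_eq]
      linarith
    · right
      simp only [Set.mem_setOf_eq, hflip ω]
      linarith
  calc μ {ω | c ≤ |∑ j, (Y j ω - ∫ ω', Y j ω' ∂μ)|}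
      ≤ μ ({ω | c ≤ ∑ j, (Y j ω - ∫ ω', Y j ω' ∂μ)}
          ∪ {ω | c ≤ ∑ j, (Y' j ω - ∫ ω', Y' j ω' ∂μ)}) := measure_mono hsub
    _ ≤ μ {ω | c ≤ ∑ j, (Y j ω - ∫ ω', Y j ω' ∂μ)}
          + μ {ω | c ≤ ∑ j, (Y' j ω - ∫ ω', Y' j ω' ∂μ)} := measure_union_le _ _
    _ ≤ ENNReal.ofReal (Real.exp (-(2 * c ^ 2 / N)))
          + ENNReal.ofReal (Real.exp (-(2 * c ^ 2 / N))) := by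
        exact add_le_add (chernoff_upper hN Y h01 hm hstep c hc)
          (chernoff_upper hN Y' h01' hm' hstep' c hc)
    _ = ENNReal.ofReal (2 * Real.exp (-(2 * c ^ 2 / N))) := by
        rw [← ENNReal.ofReal_add (Real.exp_pos _).le (Real.exp_pos _).le]
        congr 1
        ring





lemma iIndepFun_reindex {ι ι' : Type*} (e : ι' ≃ ι) (f : ι → Ω → ℝ)
    (h : iIndepFun f μ) :
    iIndepFun (fun i => f (e i)) μ := by
  rw [iIndepFun_iff_measure_inter_preimage_eq_mul] at h ⊢
  intro S sets hsets
  have key := h (S.map e.toEmbedding) (sets := fun i => sets (e.symm i)) ?_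
  · have h1 : (⋂ i ∈ S.map e.toEmbedding, f i ⁻¹' sets (e.symm i))
        = ⋂ i ∈ S, f (e i) ⁻¹' sets i := by
      ext ω
      simp only [Set.mem_iInter, Finset.mem_map, Equiv.coe_toEmbedding]
      constructor
      · intro hh i hi
        have := hh (e i) ⟨i, hi, rfl⟩
        simpa using this
      · rintro hh j ⟨i, hi, rfl⟩
        simpa using hh i hi
    have h2 : (∏ i ∈ S.map e.toEmbedding, μ (f i ⁻¹' sets (e.symm i)))
        = ∏ i ∈ S, μ (f (e i) ⁻¹' sets i) := by
      rw [Finset.prod_map]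
      apply Finset.prod_congr rfl
      intro i _
      simp
    rw [h1, h2] at key
    exact key
  · intro i hi
    rw [Finset.mem_map] at hi
    obtain ⟨j, hj, rfl⟩ := hi
    simp only [Equiv.coe_toEmbedding, Equiv.symm_apply_apply]
    exact hsets j hj

lemma step_indep {N : ℕ} (A : Ω → Matrix (Fin N) (Fin N) ℝ)
    (hmeas : ∀ i j, Measurable fun ω => A ω i j)
    (hindep : iIndepFun
      (fun (p' : Fin N × Fin N) ω => A ω p'.1 p'.2) μ)
    (u v : Fin N) (j : Fin N) (s : Finset (Fin N)) (hjs : j ∉ s) :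
    IndepFun (fun ω => A ω u j * A ω v j)
      (fun ω => ∑ k ∈ s, A ω u k * A ω v k) μ := by
  classical
  set f : Fin N × Fin N → Ω → ℝ := fun p' ω => A ω p'.1 p'.2 with hf
  set S : Finset (Fin N × Fin N) := {(u, j), (v, j)} with hS
  set Tt : Finset (Fin N × Fin N) := ({u, v} : Finset (Fin N)) ×ˢ s with hTt
  have hdisj : Disjoint S Tt := by
    rw [Finset.disjoint_left]
    rintro ⟨x, y⟩ hxy hmem
    rw [hS] at hxy
    rw [hTt, Finset.mem_product] at hmem
    simp only [Finset.mem_insert, Finset.mem_singleton, Prod.mk.injEq] at hxy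
    rcases hxy with ⟨_, hy⟩ | ⟨_, hy⟩ <;> exact hjs (hy ▸ hmem.2)
  have base := hindep.indepFun_finset S Tt hdisj (fun p => hmeas p.1 p.2)
  have hmem1 : ((u, j) : Fin N × Fin N) ∈ S := by simp [hS]
  have hmem2 : ((v, j) : Fin N × Fin N) ∈ S := by simp [hS]
  set g : (S → ℝ) → ℝ := fun x => x ⟨(u, j), hmem1⟩ * x ⟨(v, j), hmem2⟩ with hg
  have hmemT : ∀ k : {x // x ∈ s}, ∀ w ∈ ({u, v} : Finset (Fin N)),
      ((w, (k : Fin N)) : Fin N × Fin N) ∈ Tt := by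
    intro k w hw
    rw [hTt, Finset.mem_product]
    exact ⟨hw, k.2⟩
  set G : (Tt → ℝ) → ℝ := fun x => ∑ k ∈ s.attach,
      x ⟨(u, (k : Fin N)), hmemT k u (by simp)⟩ * x ⟨(v, (k : Fin N)), hmemT k v (by simp)⟩
    with hG
  have hgm : Measurable g := (measurable_pi_apply _).mul (measurable_pi_apply _)
  have hGm : Measurable G :=
    Finset.measurable_sum _ fun k _ => (measurable_pi_apply _).mul (measurable_pi_apply _)
  have key := base.comp hgm hGm
  have e1 : (fun ω => A ω u j * A ω v j) = g ∘ (fun a (i : S) => f i a) := rfl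
  have e2 : (fun ω => ∑ k ∈ s, A ω u k * A ω v k) = G ∘ (fun a (i : Tt) => f i a) := by
    funext ω
    simp only [Function.comp_apply, hG]
    rw [← Finset.sum_attach s (fun k => A ω u k * A ω v k)]
  rw [e1, e2]
  exact key

lemma prod_eq_mean {N : ℕ} (M : Matrix (Fin N) (Fin N) ℝ)
    (hM0 : ∀ i j, 0 ≤ M i j)
    (A : Ω → Matrix (Fin N) (Fin N) ℝ)
    (h01 : ∀ ω i j, A ω i j = 0 ∨ A ω i j = 1)
    (hmeas : ∀ i j, Measurable fun ω => A ω i j)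
    (hindep : iIndepFun
      (fun (p' : Fin N × Fin N) ω => A ω p'.1 p'.2) μ)
    (hBer : ∀ i j, μ {ω | A ω i j = 1} = ENNReal.ofReal (M i j))
    (u v : Fin N) (huv : u ≠ v) (j : Fin N) :
    ∫ ω, A ω u j * A ω v j ∂μ = M u j * M v j := by
  have h01' : ∀ ω, A ω u j * A ω v j = 0 ∨ A ω u j * A ω v j = 1 := by
    intro ω
    rcases h01 ω u j with h | h <;> rcases h01 ω v j with h' | h' <;> simp [h, h']
  rw [integral_01 _ h01' ((hmeas u j).mul (hmeas v j))]
  have hset : {ω | A ω u j * A ω v j = 1}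
      = (fun ω => A ω u j) ⁻¹' {1} ∩ (fun ω => A ω v j) ⁻¹' {1} := by
    ext ω
    simp only [Set.mem_setOf_eq, Set.mem_inter_iff, Set.mem_preimage, Set.mem_singleton_iff]
    constructor
    · intro h
      rcases h01 ω u j with h1 | h1 <;> rcases h01 ω v j with h2 | h2 <;>
        simp [h1, h2] at h ⊢
    · rintro ⟨h1, h2⟩
      rw [h1, h2, mul_one]
  have hpair : IndepFun (fun ω => A ω u j) (fun ω => A ω v j) μ := by
    have hne : ((u, j) : Fin N × Fin N) ≠ (v, j) := by simp [huv]
    exact hindep.indepFun hne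
  rw [hset, hpair.measure_inter_preimage_eq_mul _ _ (measurableSet_singleton 1)
    (measurableSet_singleton 1)]
  have hpre1 : (fun ω => A ω u j) ⁻¹' {1} = {ω | A ω u j = 1} := rfl
  have hpre2 : (fun ω => A ω v j) ⁻¹' {1} = {ω | A ω v j = 1} := rfl
  rw [hpre1, hpre2, hBer u j, hBer v j,
    ← ENNReal.ofReal_mul (hM0 u j)]
  exact ENNReal.toReal_ofReal (mul_nonneg (hM0 u j) (hM0 v j))

lemma diag_eq_mean {N : ℕ} (M : Matrix (Fin N) (Fin N) ℝ)
    (hM0 : ∀ i j, 0 ≤ M i j)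
    (A : Ω → Matrix (Fin N) (Fin N) ℝ)
    (h01 : ∀ ω i j, A ω i j = 0 ∨ A ω i j = 1)
    (hmeas : ∀ i j, Measurable fun ω => A ω i j)
    (hBer : ∀ i j, μ {ω | A ω i j = 1} = ENNReal.ofReal (M i j))
    (u : Fin N) (j : Fin N) :
    ∫ ω, A ω u j * A ω u j ∂μ = M u j := by
  have h01' : ∀ ω, A ω u j * A ω u j = 0 ∨ A ω u j * A ω u j = 1 := by
    intro ω
    rcases h01 ω u j with h | h <;> simp [h]
  rw [integral_01 _ h01' ((hmeas u j).mul (hmeas u j))]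
  have hset : {ω | A ω u j * A ω u j = 1} = {ω | A ω u j = 1} := by
    ext ω
    rcases h01 ω u j with h | h <;> simp [h]
  rw [hset, hBer u j]
  exact ENNReal.toReal_ofReal (hM0 u j)




lemma master {N : ℕ} (μ : Measure Ω) [IsProbabilityMeasure μ]
    (M : Matrix (Fin N) (Fin N) ℝ) (hM0 : ∀ i j, 0 ≤ M i j) (hM1 : ∀ i j, M i j ≤ 1)
    (A : Ω → Matrix (Fin N) (Fin N) ℝ)
    (h01 : ∀ ω i j, A ω i j = 0 ∨ A ω i j = 1)
    (hmeas : ∀ i j, Measurable fun ω => A ω i j)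
    (hindep : iIndepFun
      (fun (p' : Fin N × Fin N) ω => A ω p'.1 p'.2) μ)
    (hBer : ∀ i j, μ {ω | A ω i j = 1} = ENNReal.ofReal (M i j))
    (T : ℝ) (hT : 0 ≤ T) :
    ENNReal.ofReal (1 - 2 * (N : ℝ) ^ ((2 : ℝ) - 4 / (N : ℝ) ^ 2 * T ^ 2)) ≤
      μ {ω | frobNorm (A ω * (A ω)ᵀ - M * Mᵀ) ≤
        Real.sqrt 3 * T * Real.sqrt ((N : ℝ) * Real.log N)} := by
  classical
  rcases Nat.eq_zero_or_pos N with hN0 | hNpos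
  · -- N = 0 : the event is everything and the bound is 1
    subst hN0
    simp only [Nat.cast_zero]
    have hset : {ω | frobNorm (A ω * (A ω)ᵀ - M * Mᵀ) ≤
        Real.sqrt 3 * T * Real.sqrt ((0 : ℝ) * Real.log 0)} = Set.univ := by
      ext ω
      simp [frobNorm]
    rw [hset]
    simp only [measure_univ]
    have : ((0:ℝ) ^ ((2:ℝ) - 4 / (0:ℝ) ^ 2 * T ^ 2)) = 0 := by
      apply Real.zero_rpow
      norm_num
    rw [this]
    norm_num
  -- N ≥ 1
  set n : ℝ := (N : ℝ) with hn
  have hnpos : (0:ℝ) < n := by rw [hn]; exact_mod_cast hNpos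
  set E : ℝ := (2 : ℝ) - 4 / n ^ 2 * T ^ 2 with hE
  rcases le_or_gt (1 - 2 * n ^ E) 0 with htriv | hh
  · rw [ENNReal.ofReal_eq_zero.mpr htriv]
    exact zero_le
  -- nontrivial regime: N ≥ 2
  have hN2 : 2 ≤ N := by
    by_contra hcon
    push_neg at hcon
    have hN1 : N = 1 := by omega
    have h1 : n = 1 := by rw [hn, hN1]; norm_num
    rw [h1, Real.one_rpow] at hh
    norm_num at hh
  have hn2 : (2:ℝ) ≤ n := by rw [hn]; exact_mod_cast hN2
  have hlnpos : 0 < Real.log n := Real.log_pos (by linarith)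
  -- derive the lower bound on T^2
  have hT2 : n ^ 2 * (2 * Real.log n + Real.log 2) / (4 * Real.log n) < T ^ 2 := by
    have h1 : n ^ E < 1 / 2 := by linarith
    have h2 : Real.log (n ^ E) < Real.log (1 / 2) :=
      Real.log_lt_log (Real.rpow_pos_of_pos hnpos E) h1
    rw [Real.log_rpow hnpos, show (1:ℝ)/2 = 2⁻¹ by norm_num, Real.log_inv] at h2
    have h3 : 2 * Real.log n + Real.log 2 < 4 / n ^ 2 * T ^ 2 * Real.log n := by
      rw [hE] at h2
      nlinarith
    rw [div_lt_iff₀ (by positivity)]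
    have h4 := mul_lt_mul_of_pos_right h3 (show (0:ℝ) < n ^ 2 by positivity)
    calc n ^ 2 * (2 * Real.log n + Real.log 2)
        = (2 * Real.log n + Real.log 2) * n ^ 2 := by ring
      _ < 4 / n ^ 2 * T ^ 2 * Real.log n * n ^ 2 := h4
      _ = T ^ 2 * (4 * Real.log n) := by field_simp
  have hTpos : 0 < T := by
    rcases hT.eq_or_lt with h | h
    · exfalso
      rw [← h] at hT2
      have : (0:ℝ) < n ^ 2 * (2 * Real.log n + Real.log 2) / (4 * Real.log n) := by
        have := Real.log_pos (show (1:ℝ) < 2 by norm_num)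
        positivity
      nlinarith
    · exact h
  set a : ℝ := T * Real.sqrt (2 * Real.log n / n) with ha
  set b : ℝ := T * Real.sqrt ((n + 2) * Real.log n / n) with hb
  have hba : a + n / 4 ≤ b := numeric_key hn2 hT hT2
  have hapos : 0 < a := by
    apply mul_pos hTpos
    apply Real.sqrt_pos.mpr
    positivity
  have ha2 : a ^ 2 = T ^ 2 * (2 * Real.log n / n) := by
    rw [ha, mul_pow, Real.sq_sqrt (by positivity)]
  have hb2 : b ^ 2 = T ^ 2 * ((n + 2) * Real.log n / n) := by
    rw [hb, mul_pow, Real.sq_sqrt (by positivity)]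
  -- the per-pair bad events
  set Y : Fin N × Fin N → Fin N → Ω → ℝ := fun p j ω => A ω p.1 j * A ω p.2 j with hY
  set cc : Fin N × Fin N → ℝ := fun p => if p.1 = p.2 then b - n / 4 else a with hcc
  have hcca : ∀ p, a ≤ cc p := by
    intro p
    rw [hcc]
    dsimp only
    split
    · linarith
    · exact le_rfl
  set Bad : Fin N × Fin N → Set Ω :=
    fun p => {ω | cc p ≤ |∑ j, (Y p j ω - ∫ ω', Y p j ω' ∂μ)|} with hBad
  have hY01 : ∀ p j ω, Y p j ω = 0 ∨ Y p j ω = 1 := by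
    intro p j ω
    rcases h01 ω p.1 j with h | h <;> rcases h01 ω p.2 j with h' | h' <;> simp [hY, h, h']
  have hYm : ∀ p j, Measurable (Y p j) := fun p j => (hmeas p.1 j).mul (hmeas p.2 j)
  have hbad : ∀ p, μ (Bad p) ≤ ENNReal.ofReal (2 * Real.exp (-(2 * a ^ 2 / n))) := by
    intro p
    have hstep' : ∀ (j : Fin N) (s : Finset (Fin N)), j ∉ s →
        IndepFun (Y p j) (fun ω => ∑ k ∈ s, Y p k ω) μ := by
      intro j s hjs
      exact step_indep A hmeas hindep p.1 p.2 j s hjs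
    have hccpos : 0 < cc p := lt_of_lt_of_le hapos (hcca p)
    have := chernoff_abs hNpos (Y p) (hY01 p) (hYm p) hstep' (cc p) hccpos
    refine this.trans (ENNReal.ofReal_le_ofReal ?_)
    have h1 : a ^ 2 ≤ cc p ^ 2 := by
      apply pow_le_pow_left₀ hapos.le (hcca p)
    have h2 : 2 * a ^ 2 / n ≤ 2 * cc p ^ 2 / n := by gcongr
    have h3 : Real.exp (-(2 * cc p ^ 2 / (N:ℝ))) ≤ Real.exp (-(2 * a ^ 2 / n)) := by
      apply Real.exp_le_exp.mpr
      rw [← hn]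
      linarith
    nlinarith [Real.exp_pos (-(2 * cc p ^ 2 / (N:ℝ)))]
  -- union bound
  have hunion : μ (⋃ p, Bad p) ≤ ENNReal.ofReal (2 * n ^ E) := by
    have h1 : μ (⋃ p, Bad p) ≤ ∑' p : Fin N × Fin N, μ (Bad p) := measure_iUnion_le _
    have h2 : ∑' p : Fin N × Fin N, μ (Bad p)
        ≤ ∑' _p : Fin N × Fin N, ENNReal.ofReal (2 * Real.exp (-(2 * a ^ 2 / n))) :=
      ENNReal.tsum_le_tsum hbad
    have h3 : ∑' _p : Fin N × Fin N, ENNReal.ofReal (2 * Real.exp (-(2 * a ^ 2 / n)))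
        = (N * N : ℕ) * ENNReal.ofReal (2 * Real.exp (-(2 * a ^ 2 / n))) := by
      rw [tsum_fintype]
      rw [Finset.sum_const, Finset.card_univ]
      simp [Fintype.card_prod, nsmul_eq_mul]
    have h4 : ((N * N : ℕ) : ℝ≥0∞) * ENNReal.ofReal (2 * Real.exp (-(2 * a ^ 2 / n)))
        = ENNReal.ofReal ((N * N : ℕ) * (2 * Real.exp (-(2 * a ^ 2 / n)))) := by
      rw [← ENNReal.ofReal_natCast (N * N), ← ENNReal.ofReal_mul (by positivity)]
    have h5 : ((N * N : ℕ) : ℝ) * (2 * Real.exp (-(2 * a ^ 2 / n))) = 2 * n ^ E := by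
      have hcast : ((N * N : ℕ) : ℝ) = n ^ 2 := by
        push_cast [hn]
        ring
      have hexp : -(2 * a ^ 2 / n) = -(4 * T ^ 2 * Real.log n / n ^ 2) := by
        rw [ha2]
        field_simp
        ring
      have hrpow : n ^ E = n ^ 2 * Real.exp (-(4 * T ^ 2 * Real.log n / n ^ 2)) := by
        rw [Real.rpow_def_of_pos hnpos]
        have hlE : Real.log n * E = 2 * Real.log n - 4 * T ^ 2 * Real.log n / n ^ 2 := by
          rw [hE]
          field_simp
        rw [hlE, sub_eq_add_neg, Real.exp_add]
        congr 1
        rw [show 2 * Real.log n = Real.log n + Real.log n by ring, Real.exp_add,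
          Real.exp_log hnpos]
        ring
      rw [hcast, hexp, hrpow]
      ring
    calc μ (⋃ p, Bad p) ≤ ∑' p : Fin N × Fin N, μ (Bad p) := h1
      _ ≤ ∑' _p : Fin N × Fin N, ENNReal.ofReal (2 * Real.exp (-(2 * a ^ 2 / n))) := h2
      _ = ENNReal.ofReal ((N * N : ℕ) * (2 * Real.exp (-(2 * a ^ 2 / n)))) := by
          rw [h3, h4]
      _ = ENNReal.ofReal (2 * n ^ E) := by rw [h5]
  -- the good event is contained in the target event
  have hsubset : (⋂ p, (Bad p)ᶜ) ⊆ {ω | frobNorm (A ω * (A ω)ᵀ - M * Mᵀ) ≤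
      Real.sqrt 3 * T * Real.sqrt ((N : ℝ) * Real.log N)} := by
    intro ω hω
    simp only [Set.mem_iInter, Set.mem_compl_iff, hBad, Set.mem_setOf_eq, not_le] at hω
    have hentry : ∀ u v : Fin N, |(A ω * (A ω)ᵀ - M * Mᵀ) u v| ≤ if u = v then b else a := by
      intro u v
      have happ : (A ω * (A ω)ᵀ - M * Mᵀ) u v
          = ∑ j, A ω u j * A ω v j - ∑ j, M u j * M v j := by
        simp [Matrix.sub_apply, Matrix.mul_apply, Matrix.transpose_apply]
      rcases eq_or_ne u v with huv | huv
      · subst huv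
        have hωp := hω (u, u)
        have hccp : cc (u, u) = b - n / 4 := by simp [hcc]
        rw [hccp] at hωp
        have hint : ∀ j, ∫ ω', Y (u, u) j ω' ∂μ = M u j :=
          fun j => diag_eq_mean M hM0 A h01 hmeas hBer u j
        have hsum1 : |∑ j, A ω u j * A ω u j - ∑ j, M u j| < b - n / 4 := by
          have := hωp
          simp only [hY] at this
          rw [Finset.sum_sub_distrib] at this
          simpa [diag_eq_mean M hM0 A h01 hmeas hBer u] using this
        have hsum2 : (0:ℝ) ≤ ∑ j, (M u j - M u j * M u j) := by
          apply Finset.sum_nonneg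
          intro j _
          nlinarith [hM0 u j, hM1 u j]
        have hsum3 : ∑ j, (M u j - M u j * M u j) ≤ n / 4 := by
          have hle : ∀ j ∈ Finset.univ, M u j - M u j * M u j ≤ 1 / 4 := by
            intro j _
            nlinarith [hM0 u j, hM1 u j, sq_nonneg (M u j - 1 / 2)]
          calc ∑ j, (M u j - M u j * M u j) ≤ Finset.univ.card • ((1:ℝ) / 4) :=
                Finset.sum_le_card_nsmul _ _ _ hle
            _ = n / 4 := by
                rw [Finset.card_univ, Fintype.card_fin, nsmul_eq_mul, hn]
                ring
        have hdiff : ∑ j, M u j - ∑ j, M u j * M u j = ∑ j, (M u j - M u j * M u j) := by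
          rw [Finset.sum_sub_distrib]
        rw [happ, if_pos rfl]
        have habs := abs_lt.mp hsum1
        rw [abs_le]
        constructor <;> nlinarith [habs.1, habs.2, hsum2, hsum3, hdiff]
      · have hωp := hω (u, v)
        have hccp : cc (u, v) = a := by simp [hcc, huv]
        rw [hccp] at hωp
        have hint : ∀ j, ∫ ω', Y (u, v) j ω' ∂μ = M u j * M v j :=
          fun j => prod_eq_mean M hM0 A h01 hmeas hindep hBer u v huv j
        have hsum1 : |∑ j, A ω u j * A ω v j - ∑ j, M u j * M v j| < a := by
          have := hωp
          simp only [hY] at this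
          rw [Finset.sum_sub_distrib] at this
          simpa [prod_eq_mean M hM0 A h01 hmeas hindep hBer u v huv] using this
        rw [happ, if_neg huv]
        exact hsum1.le
    -- assemble the Frobenius norm bound
    simp only [Set.mem_setOf_eq]
    have hsumbound : ∑ u, ∑ v, ((A ω * (A ω)ᵀ - M * Mᵀ) u v) ^ 2
        ≤ 3 * T ^ 2 * (n * Real.log n) := by
      have hterm : ∀ u v : Fin N, ((A ω * (A ω)ᵀ - M * Mᵀ) u v) ^ 2
          ≤ if u = v then b ^ 2 else a ^ 2 := by
        intro u v
        have h1 := hentry u v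
        have h2 : ((A ω * (A ω)ᵀ - M * Mᵀ) u v) ^ 2 ≤ (if u = v then b else a) ^ 2 := by
          rw [← sq_abs]
          apply pow_le_pow_left₀ (abs_nonneg _) h1
        rwa [apply_ite (· ^ 2)] at h2
      calc ∑ u, ∑ v, ((A ω * (A ω)ᵀ - M * Mᵀ) u v) ^ 2
          ≤ ∑ u : Fin N, ∑ v : Fin N, (if u = v then b ^ 2 else a ^ 2) := by
            apply Finset.sum_le_sum
            intro u _
            apply Finset.sum_le_sum
            intro v _
            exact hterm u v
        _ = ∑ _u : Fin N, ((n - 1) * a ^ 2 + b ^ 2) := by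
            apply Finset.sum_congr rfl
            intro u _
            have : ∑ v : Fin N, (if u = v then b ^ 2 else a ^ 2)
                = ∑ v : Fin N, (a ^ 2 + if u = v then b ^ 2 - a ^ 2 else 0) := by
              apply Finset.sum_congr rfl
              intro v _
              split <;> ring
            rw [this, Finset.sum_add_distrib, Finset.sum_const, Finset.sum_ite_eq,
              if_pos (Finset.mem_univ u), Finset.card_univ, Fintype.card_fin,
              nsmul_eq_mul, hn]
            ring
        _ = n * ((n - 1) * a ^ 2 + b ^ 2) := by
            rw [Finset.sum_const, Finset.card_univ, Fintype.card_fin, nsmul_eq_mul, hn]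
        _ = 3 * T ^ 2 * (n * Real.log n) := by
            rw [ha2, hb2]
            field_simp
            ring
    rw [frobNorm]
    rw [← hn]
    calc Real.sqrt (∑ u, ∑ v, ((A ω * (A ω)ᵀ - M * Mᵀ) u v) ^ 2)
        ≤ Real.sqrt (3 * T ^ 2 * (n * Real.log n)) := Real.sqrt_le_sqrt hsumbound
      _ = Real.sqrt 3 * T * Real.sqrt (n * Real.log n) := by
          rw [show 3 * T ^ 2 * (n * Real.log n) = (3 * T ^ 2) * (n * Real.log n) by ring,
            Real.sqrt_mul (by positivity), Real.sqrt_mul (by norm_num : (0:ℝ) ≤ 3),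
            Real.sqrt_sq hT]
  -- conclusion
  have hcompl : (Set.univ : Set Ω) ⊆ (⋂ p, (Bad p)ᶜ) ∪ (⋃ p, Bad p) := by
    intro ω _
    by_cases hmem : ω ∈ ⋂ p, (Bad p)ᶜ
    · exact Or.inl hmem
    · right
      simp only [Set.mem_iInter, Set.mem_compl_iff, not_forall, not_not] at hmem
      obtain ⟨p, hp⟩ := hmem
      exact Set.mem_iUnion.mpr ⟨p, hp⟩
  have hone : (1 : ℝ≥0∞) ≤ μ (⋂ p, (Bad p)ᶜ) + ENNReal.ofReal (2 * n ^ E) := by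
    calc (1 : ℝ≥0∞) = μ Set.univ := (measure_univ (μ := μ)).symm
      _ ≤ μ ((⋂ p, (Bad p)ᶜ) ∪ (⋃ p, Bad p)) := measure_mono hcompl
      _ ≤ μ (⋂ p, (Bad p)ᶜ) + μ (⋃ p, Bad p) := measure_union_le _ _
      _ ≤ μ (⋂ p, (Bad p)ᶜ) + ENNReal.ofReal (2 * n ^ E) := by
          exact add_le_add le_rfl hunion
  have hfinal : ENNReal.ofReal (1 - 2 * n ^ E) ≤ μ (⋂ p, (Bad p)ᶜ) := by
    rw [ENNReal.ofReal_sub _ (by positivity : (0:ℝ) ≤ 2 * n ^ E), ENNReal.ofReal_one]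
    exact tsub_le_iff_right.mpr hone
  calc ENNReal.ofReal (1 - 2 * n ^ E) ≤ μ (⋂ p, (Bad p)ᶜ) := hfinal
    _ ≤ μ {ω | frobNorm (A ω * (A ω)ᵀ - M * Mᵀ) ≤
        Real.sqrt 3 * T * Real.sqrt ((N : ℝ) * Real.log N)} := measure_mono hsubset


end Aux

/-- ASE concentration for the directed core-periphery SBM: with probability at
least `1 − 2N^{2 − (4/N²)T₁²}`, `‖AAᵀ − QQᵀ‖_F ≤ √3 T₁ √(N log N)`, and with probability at
least `1 − 2N^{2 − (4/N²)T₂²}`, `‖AᵀA − QᵀQ‖_F ≤ √3 T₂ √(N log N)`. -/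
theorem stmt14 {N : ℕ}
    {Ω : Type*} [MeasurableSpace Ω] (μ : Measure Ω) [IsProbabilityMeasure μ]
    (G₁ : Finset (Fin N))
    (p q r s : ℝ) (hs0 : 0 ≤ s) (hsr : s < r) (hsq : s < q) (hrp : r < p) (hqp : q < p)
    (hp1 : p ≤ 1)
    (Q : Matrix (Fin N) (Fin N) ℝ)
    (hQ : ∀ i j, Q i j =
      if i ∈ G₁ then (if j ∈ G₁ then p else q) else (if j ∈ G₁ then r else s))
    (A : Ω → Matrix (Fin N) (Fin N) ℝ)
    (h01 : ∀ ω i j, A ω i j = 0 ∨ A ω i j = 1)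
    (hmeas : ∀ i j, Measurable fun ω => A ω i j)
    (hindep : iIndepFun
      (fun (p' : Fin N × Fin N) ω => A ω p'.1 p'.2) μ)
    (hBer : ∀ i j, μ {ω | A ω i j = 1} = ENNReal.ofReal (Q i j))
    (T₁ T₂ : ℝ)
    (hT₁ : T₁ = (∑ _w ∈ G₁, (1 - r ^ 2)) + ∑ _w ∈ G₁ᶜ, (1 - s ^ 2))
    (hT₂ : T₂ = (∑ _w ∈ G₁, (1 - q ^ 2)) + ∑ _w ∈ G₁ᶜ, (1 - s ^ 2)) :
    ENNReal.ofReal (1 - 2 * (N : ℝ) ^ ((2 : ℝ) - 4 / (N : ℝ) ^ 2 * T₁ ^ 2)) ≤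
      μ {ω | frobNorm (A ω * (A ω)ᵀ - Q * Qᵀ) ≤
        Real.sqrt 3 * T₁ * Real.sqrt ((N : ℝ) * Real.log N)} ∧
    ENNReal.ofReal (1 - 2 * (N : ℝ) ^ ((2 : ℝ) - 4 / (N : ℝ) ^ 2 * T₂ ^ 2)) ≤
      μ {ω | frobNorm ((A ω)ᵀ * A ω - Qᵀ * Q) ≤
        Real.sqrt 3 * T₂ * Real.sqrt ((N : ℝ) * Real.log N)} := by
  
  have hr1 : r < 1 := lt_of_lt_of_le hrp hp1
  have hq1 : q < 1 := lt_of_lt_of_le hqp hp1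
  have hr0 : 0 ≤ r := le_of_lt (lt_of_le_of_lt hs0 hsr)
  have hq0 : 0 ≤ q := le_of_lt (lt_of_le_of_lt hs0 hsq)
  have hs1 : s < 1 := lt_trans hsr hr1
  have hp0 : 0 ≤ p := le_trans hq0 hqp.le
  have hQ0 : ∀ i j, 0 ≤ Q i j := by
    intro i j
    rw [hQ]
    split <;> split <;> linarith
  have hQ1 : ∀ i j, Q i j ≤ 1 := by
    intro i j
    rw [hQ]
    split <;> split <;> linarith
  have hT₁0 : 0 ≤ T₁ := by
    rw [hT₁]
    apply add_nonneg <;> apply Finset.sum_nonneg <;> intro w _ <;> nlinarith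
  have hT₂0 : 0 ≤ T₂ := by
    rw [hT₂]
    apply add_nonneg <;> apply Finset.sum_nonneg <;> intro w _ <;> nlinarith
  constructor
  · exact master μ Q hQ0 hQ1 A h01 hmeas hindep hBer T₁ hT₁0
  · -- transposed version
    have hQ0' : ∀ i j, 0 ≤ Qᵀ i j := fun i j => hQ0 j i
    have hQ1' : ∀ i j, Qᵀ i j ≤ 1 := fun i j => hQ1 j i
    have h01' : ∀ ω i j, (A ω)ᵀ i j = 0 ∨ (A ω)ᵀ i j = 1 := fun ω i j => h01 ω j i
    have hmeas' : ∀ i j, Measurable fun ω => (A ω)ᵀ i j := fun i j => hmeas j i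
    have hindep' : iIndepFun
        (fun (p' : Fin N × Fin N) ω => (A ω)ᵀ p'.1 p'.2) μ := by
      have h := iIndepFun_reindex (Equiv.prodComm (Fin N) (Fin N))
        (fun p' ω => A ω p'.1 p'.2) hindep
      exact h
    have hBer' : ∀ i j, μ {ω | (A ω)ᵀ i j = 1} = ENNReal.ofReal (Qᵀ i j) :=
      fun i j => hBer j i
    have key := master μ Qᵀ hQ0' hQ1' (fun ω => (A ω)ᵀ) h01' hmeas' hindep' hBer' T₂ hT₂0
    simpa [Matrix.transpose_transpose] using key
end
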